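/- There exists a constant C > 0 such that for every u ∈ L²((0,1),ℂ) and every continuously differentiable function ψ : [0,1] → ℂ with ψ(0) = ψ(1), one has |∫₀¹ u(x)·conj(ψ(x))dx| ≤ C·(‖Pu‖_{L²(0,1)} + |μ₀(u)|)·(‖ψ‖²_{L²(0,1)} + ‖ψ′‖²_{L²(0,1)})^{1/2}. -/

import Mathlib

open MeasureTheory intervalIntegral Set

/-- `𝓘g(x) = ∫₀ˣ g(y) dy` -/
noncomputable def Iprim (g : ℝ → ℂ) (x : ℝ) : ℂ := ∫ y in (0:ℝ)..x, g y

/-- `Pg(x) = 𝓘g(x) − ∫₀¹ 𝓘g(z) dz` -/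
noncomputable def Pfun (g : ℝ → ℂ) (x : ℝ) : ℂ := Iprim g x - ∫ z in (0:ℝ)..1, Iprim g z

/-- `μ₀(g) = ∫₀¹ g(x) dx` -/
noncomputable def mu0 (g : ℝ → ℂ) : ℂ := ∫ x in (0:ℝ)..1, g x

/-- There is `C > 0` such that for every `u ∈ L²((0,1),ℂ)` and every continuously
differentiable `ψ : [0,1] → ℂ` with `ψ(0) = ψ(1)`:
`|∫₀¹ u ψ̄| ≤ C (‖Pu‖_{L²} + |μ₀(u)|) (‖ψ‖²_{L²} + ‖ψ′‖²_{L²})^{1/2}`. -/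
instance : IsFiniteMeasure (volume.restrict (Set.Ioc (0:ℝ) 1)) :=
  ⟨by rw [Measure.restrict_apply_univ]; simp [Real.volume_Ioc]⟩

instance : IsFiniteMeasure (volume.restrict (Set.Ioo (0:ℝ) 1)) :=
  ⟨by rw [Measure.restrict_apply_univ]; simp [Real.volume_Ioo]⟩

lemma intervalIntegral_conj {f : ℝ → ℂ} {a b : ℝ} :
    ∫ x in a..b, (starRingEnd ℂ) (f x) = (starRingEnd ℂ) (∫ x in a..b, f x) := by
  unfold intervalIntegral
  rw [integral_conj, integral_conj, ← map_sub]

lemma memL2_of_continuousOn {F : ℝ → ℝ} (hF : ContinuousOn F (Icc 0 1)) :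
    MemLp F (ENNReal.ofReal 2) (volume.restrict (Ioc (0:ℝ) 1)) := by
  obtain ⟨C, hC⟩ := isCompact_Icc.exists_bound_of_continuousOn hF
  refine MemLp.of_bound ((hF.mono Ioc_subset_Icc_self).aestronglyMeasurable measurableSet_Ioc) C ?_
  filter_upwards [ae_restrict_mem measurableSet_Ioc] with x hx
  exact hC x (Ioc_subset_Icc_self hx)

/-- Cauchy-Schwarz for continuous nonneg functions on [0,1]. -/
lemma cs_aux {f g : ℝ → ℝ} (hf : ContinuousOn f (Icc 0 1)) (hg : ContinuousOn g (Icc 0 1))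
    (hf0 : ∀ x, 0 ≤ f x) (hg0 : ∀ x, 0 ≤ g x) :
    ∫ x in (0:ℝ)..1, f x * g x ≤
      (∫ x in (0:ℝ)..1, f x ^ 2) ^ ((1:ℝ)/2) * (∫ x in (0:ℝ)..1, g x ^ 2) ^ ((1:ℝ)/2) := by
  have hpq : Real.HolderConjugate 2 2 := Real.holderConjugate_iff.mpr ⟨one_lt_two, by norm_num⟩
  have h := integral_mul_le_Lp_mul_Lq_of_nonneg hpq
    (Filter.Eventually.of_forall hf0) (Filter.Eventually.of_forall hg0)
    (memL2_of_continuousOn hf) (memL2_of_continuousOn hg)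
  simp_rw [show ((2:ℝ)) = ((2:ℕ):ℝ) by norm_num, Real.rpow_natCast] at h
  rw [intervalIntegral.integral_of_le zero_le_one, intervalIntegral.integral_of_le zero_le_one,
    intervalIntegral.integral_of_le zero_le_one]
  exact h

/-- Fubini on the triangle. -/
lemma fubini_triangle {u φ : ℝ → ℂ} (hu : IntegrableOn u (Ioc 0 1) volume)
    (hφ : IntegrableOn φ (Ioc 0 1) volume) :
    (∫ x in (0:ℝ)..1, u x * ∫ y in x..1, φ y) = ∫ y in (0:ℝ)..1, (Iprim u y) * φ y := by
  have hmeas : MeasurableSet (Ioc (0:ℝ) 1) := measurableSet_Ioc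
  have hS : MeasurableSet {q : ℝ × ℝ | q.1 ≤ q.2} := measurableSet_le measurable_fst measurable_snd
  set ν := volume.restrict (Ioc (0:ℝ) 1) with hν
  set F : ℝ × ℝ → ℂ := Set.indicator {q : ℝ × ℝ | q.1 ≤ q.2} (fun q => u q.1 * φ q.2) with hF
  have hFint : Integrable F (ν.prod ν) := (Integrable.mul_prod hu hφ).indicator hS
  have key : (∫ x, ∫ y, F (x, y) ∂ν ∂ν) = ∫ y, ∫ x, F (x, y) ∂ν ∂ν :=
    integral_integral_swap (f := fun x y => F (x, y)) hFint
  have hL : ∀ x ∈ Ioc (0:ℝ) 1, (∫ y, F (x, y) ∂ν) = u x * ∫ y in x..1, φ y := by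
    intro x hx
    have h1 : (fun y => F (x, y)) = Set.indicator (Ici x) (fun y => u x * φ y) := by
      funext y
      simp [hF, Set.indicator_apply, Set.mem_Ici, Set.mem_setOf_eq]
    rw [h1, MeasureTheory.integral_indicator measurableSet_Ici, hν, Measure.restrict_restrict measurableSet_Ici]
    have h2 : Ici x ∩ Ioc (0:ℝ) 1 = Icc x 1 := by
      ext y
      simp only [mem_inter_iff, mem_Ici, mem_Ioc, mem_Icc]
      exact ⟨fun ⟨a, _, c⟩ => ⟨a, c⟩, fun ⟨a, b⟩ => ⟨a, lt_of_lt_of_le hx.1 a, b⟩⟩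
    rw [h2, MeasureTheory.integral_const_mul, integral_Icc_eq_integral_Ioc,
      ← intervalIntegral.integral_of_le hx.2]
  have hR : ∀ y ∈ Ioc (0:ℝ) 1, (∫ x, F (x, y) ∂ν) = (Iprim u y) * φ y := by
    intro y hy
    have h1 : (fun x => F (x, y)) = Set.indicator (Iic y) (fun x => u x * φ y) := by
      funext x
      simp [hF, Set.indicator_apply, Set.mem_Iic, Set.mem_setOf_eq]
    rw [h1, MeasureTheory.integral_indicator measurableSet_Iic, hν, Measure.restrict_restrict measurableSet_Iic]
    have h2 : Iic y ∩ Ioc (0:ℝ) 1 = Ioc 0 y := by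
      ext x
      simp only [mem_inter_iff, mem_Iic, mem_Ioc]
      exact ⟨fun ⟨a, b, _⟩ => ⟨b, a⟩, fun ⟨a, b⟩ => ⟨b, a, b.trans hy.2⟩⟩
    rw [h2, MeasureTheory.integral_mul_const]
    unfold Iprim
    rw [intervalIntegral.integral_of_le hy.1.le]
  rw [intervalIntegral.integral_of_le zero_le_one, intervalIntegral.integral_of_le zero_le_one]
  calc ∫ x in Ioc (0:ℝ) 1, (u x * ∫ y in x..1, φ y) ∂volume
      = ∫ x, (∫ y, F (x, y) ∂ν) ∂ν := (setIntegral_congr_fun hmeas hL).symm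
    _ = ∫ y, (∫ x, F (x, y) ∂ν) ∂ν := key
    _ = ∫ y in Ioc (0:ℝ) 1, (Iprim u y) * φ y ∂volume := setIntegral_congr_fun hmeas hR

lemma contIcc_ii {E : Type*} [NormedAddCommGroup E] {f : ℝ → E}
    (hf : ContinuousOn f (Icc 0 1)) : IntervalIntegrable f volume 0 1 :=
  ContinuousOn.intervalIntegrable_of_Icc zero_le_one hf

theorem stmt2 :
    ∃ C : ℝ, 0 < C ∧
      ∀ (u : ℝ → ℂ), MemLp u 2 (volume.restrict (Set.Ioo (0:ℝ) 1)) →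
      ∀ (ψ ψ' : ℝ → ℂ),
        (∀ x ∈ Set.Icc (0:ℝ) 1, HasDerivWithinAt ψ (ψ' x) (Set.Icc (0:ℝ) 1) x) →
        ContinuousOn ψ' (Set.Icc (0:ℝ) 1) →
        ψ 0 = ψ 1 →
        ‖∫ x in (0:ℝ)..1, u x * (starRingEnd ℂ) (ψ x)‖ ≤
          C * ((∫ x in (0:ℝ)..1, ‖Pfun u x‖ ^ 2) ^ ((1:ℝ)/2) + ‖mu0 u‖) *
            ((∫ x in (0:ℝ)..1, ‖ψ x‖ ^ 2) + (∫ x in (0:ℝ)..1, ‖ψ' x‖ ^ 2)) ^ ((1:ℝ)/2) := by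
  refine ⟨2, two_pos, ?_⟩
  intro u hu ψ ψ' hψ hψ'c hper
  set φ : ℝ → ℂ := fun y => (starRingEnd ℂ) (ψ' y) with hφdef
  -- integrability of u
  have huIoo : IntegrableOn u (Ioo 0 1) volume := hu.integrable (by norm_num)
  have huIoc : IntegrableOn u (Ioc 0 1) volume := by
    rw [IntegrableOn, ← Measure.restrict_congr_set Ioo_ae_eq_Ioc]; exact huIoo
  have huIcc : IntegrableOn u (Icc 0 1) volume := by
    rw [IntegrableOn, ← Measure.restrict_congr_set Ioc_ae_eq_Icc]; exact huIoc
  -- continuity facts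
  have hcψ : ContinuousOn ψ (Icc 0 1) := fun x hx => (hψ x hx).continuousWithinAt
  have hφc : ContinuousOn φ (Icc 0 1) := by
    rw [hφdef]
    exact continuous_star.comp_continuousOn hψ'c
  have hIu_cont : ContinuousOn (Iprim u) (Icc 0 1) := by
    have h := intervalIntegral.continuousOn_primitive_interval (a := 0) (b := 1)
      (μ := volume) (f := u) (by rwa [uIcc_of_le zero_le_one])
    rwa [uIcc_of_le zero_le_one] at h
  have hPc : ContinuousOn (Pfun u) (Icc 0 1) := hIu_cont.sub continuousOn_const
  -- FTC for ψ
  have hFTC : ∀ a ∈ Icc (0:ℝ) 1, (∫ y in a..1, ψ' y) = ψ 1 - ψ a := by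
    intro a ha
    refine intervalIntegral.integral_eq_sub_of_hasDeriv_right_of_le ha.2
      (hcψ.mono (Icc_subset_Icc ha.1 le_rfl)) (fun x hx => ?_)
      ((hψ'c.mono (Icc_subset_Icc ha.1 le_rfl)).intervalIntegrable_of_Icc ha.2)
    have hx01 : x ∈ Icc (0:ℝ) 1 := ⟨le_trans ha.1 hx.1.le, hx.2.le⟩
    exact ((hψ x hx01).hasDerivAt
      (Icc_mem_nhds (lt_of_le_of_lt ha.1 hx.1) hx.2)).hasDerivWithinAt
  have hφFTC : ∀ a ∈ Icc (0:ℝ) 1,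
      (∫ y in a..1, φ y) = (starRingEnd ℂ) (ψ 1) - (starRingEnd ℂ) (ψ a) := by
    intro a ha
    rw [hφdef]
    rw [_root_.intervalIntegral_conj, hFTC a ha, map_sub]
  have hmu0φ : (∫ y in (0:ℝ)..1, φ y) = 0 := by
    rw [hφFTC 0 ⟨le_refl 0, zero_le_one⟩, hper, sub_self]
  -- the primitive-from-the-right of φ
  have hφIcc : IntegrableOn φ (Icc 0 1) volume :=
    ContinuousOn.integrableOn_compact isCompact_Icc hφc
  set h2fun : ℝ → ℂ := fun x => ∫ y in x..1, φ y with hh2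
  have hh2c : ContinuousOn h2fun (Icc 0 1) := by
    have h := intervalIntegral.continuousOn_primitive_interval_left (a := 0) (b := 1)
      (μ := volume) (f := φ) (by rwa [uIcc_of_le zero_le_one])
    rwa [uIcc_of_le zero_le_one] at h
  -- integrabilities on (0,1]
  have haeIoc : ∀ᵐ x ∂(volume.restrict (Ioc (0:ℝ) 1)), x ∈ Ioc (0:ℝ) 1 :=
    ae_restrict_mem measurableSet_Ioc
  obtain ⟨Cψ, hCψ⟩ := isCompact_Icc.exists_bound_of_continuousOn hcψ
  obtain ⟨Ch, hCh⟩ := isCompact_Icc.exists_bound_of_continuousOn hh2c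
  have hbdd_mul : ∀ (g : ℝ → ℂ) (Cg : ℝ), ContinuousOn g (Icc 0 1) →
      (∀ x ∈ Icc (0:ℝ) 1, ‖g x‖ ≤ Cg) →
      IntervalIntegrable (fun x => u x * g x) volume 0 1 := by
    intro g Cg hgc hCg
    rw [intervalIntegrable_iff_integrableOn_Ioc_of_le zero_le_one]
    have h : Integrable (fun x => g x * u x) (volume.restrict (Ioc 0 1)) := by
      refine huIoc.bdd_mul (c := Cg)
        (((hgc.mono Ioc_subset_Icc_self)).aestronglyMeasurable measurableSet_Ioc) ?_
      filter_upwards [haeIoc] with x hx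
      exact hCg x (Ioc_subset_Icc_self hx)
    have e : (fun x => g x * u x) = fun x => u x * g x := funext fun x => mul_comm _ _
    rwa [e] at h
  have hI1 : IntervalIntegrable (fun x => u x * (starRingEnd ℂ) (ψ x)) volume 0 1 := by
    refine hbdd_mul _ Cψ (continuous_star.comp_continuousOn hcψ) ?_
    intro x hx
    rw [show ‖(starRingEnd ℂ) (ψ x)‖ = ‖ψ x‖ from RCLike.norm_conj _]
    exact hCψ x hx
  have hI2 : IntervalIntegrable (fun x => u x * h2fun x) volume 0 1 :=
    hbdd_mul _ Ch hh2c hCh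
  have hI3 : IntervalIntegrable (fun x => u x * (starRingEnd ℂ) (ψ 1)) volume 0 1 := by
    rw [intervalIntegrable_iff_integrableOn_Ioc_of_le zero_le_one]
    exact huIoc.mul_const _
  -- split off the mean
  have hsplit : (∫ x in (0:ℝ)..1, u x * (starRingEnd ℂ) (ψ x))
      = mu0 u * (starRingEnd ℂ) (ψ 1) - ∫ x in (0:ℝ)..1, u x * h2fun x := by
    have e1 : EqOn (fun x => u x * (starRingEnd ℂ) (ψ x))
        (fun x => u x * (starRingEnd ℂ) (ψ 1) - u x * h2fun x) (uIcc 0 1) := by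
      intro x hx
      rw [uIcc_of_le zero_le_one] at hx
      simp only [hh2]
      rw [hφFTC x hx]
      ring
    rw [intervalIntegral.integral_congr e1, intervalIntegral.integral_sub hI3 hI2,
      intervalIntegral.integral_mul_const]
    rfl
  -- Fubini + recentering
  have hfub : (∫ x in (0:ℝ)..1, u x * h2fun x) = ∫ y in (0:ℝ)..1, (Iprim u y) * φ y :=
    fubini_triangle huIoc (hφIcc.mono_set Ioc_subset_Icc_self)
  have hPφ : (∫ y in (0:ℝ)..1, Iprim u y * φ y) = ∫ y in (0:ℝ)..1, Pfun u y * φ y := by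
    have e : EqOn (fun y => Iprim u y * φ y)
        (fun y => Pfun u y * φ y + (∫ z in (0:ℝ)..1, Iprim u z) * φ y) (uIcc 0 1) := by
      intro y _
      simp only [Pfun]
      ring
    rw [intervalIntegral.integral_congr e,
      intervalIntegral.integral_add (contIcc_ii (f := fun y => Pfun u y * φ y) (hPc.mul hφc)) ((contIcc_ii hφc).const_mul _),
      intervalIntegral.integral_const_mul, hmu0φ, mul_zero, add_zero]
  -- nonnegativity facts
  have hP2 : 0 ≤ ∫ x in (0:ℝ)..1, ‖Pfun u x‖ ^ 2 :=
    intervalIntegral.integral_nonneg zero_le_one (fun x _ => by positivity)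
  have hψ2 : 0 ≤ ∫ x in (0:ℝ)..1, ‖ψ x‖ ^ 2 :=
    intervalIntegral.integral_nonneg zero_le_one (fun x _ => by positivity)
  have hψ'2 : 0 ≤ ∫ x in (0:ℝ)..1, ‖ψ' x‖ ^ 2 :=
    intervalIntegral.integral_nonneg zero_le_one (fun x _ => by positivity)
  have hAnn : 0 ≤ (∫ x in (0:ℝ)..1, ‖Pfun u x‖ ^ 2) ^ ((1:ℝ)/2) := Real.rpow_nonneg hP2 _
  have hBnn : 0 ≤ ‖mu0 u‖ := norm_nonneg _
  have hSnn : 0 ≤ ((∫ x in (0:ℝ)..1, ‖ψ x‖ ^ 2) + ∫ x in (0:ℝ)..1, ‖ψ' x‖ ^ 2) ^ ((1:ℝ)/2) :=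
    Real.rpow_nonneg (add_nonneg hψ2 hψ'2) _
  have hSψS : (∫ x in (0:ℝ)..1, ‖ψ x‖ ^ 2) ^ ((1:ℝ)/2) ≤
      ((∫ x in (0:ℝ)..1, ‖ψ x‖ ^ 2) + ∫ x in (0:ℝ)..1, ‖ψ' x‖ ^ 2) ^ ((1:ℝ)/2) :=
    Real.rpow_le_rpow hψ2 (le_add_of_nonneg_right hψ'2) (by norm_num)
  have hSψ'S : (∫ x in (0:ℝ)..1, ‖ψ' x‖ ^ 2) ^ ((1:ℝ)/2) ≤
      ((∫ x in (0:ℝ)..1, ‖ψ x‖ ^ 2) + ∫ x in (0:ℝ)..1, ‖ψ' x‖ ^ 2) ^ ((1:ℝ)/2) :=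
    Real.rpow_le_rpow hψ'2 (le_add_of_nonneg_left hψ2) (by norm_num)
  -- L¹ ≤ L²
  have hL1L2 : ∀ (f : ℝ → ℂ), ContinuousOn f (Icc 0 1) →
      (∫ x in (0:ℝ)..1, ‖f x‖) ≤ (∫ x in (0:ℝ)..1, ‖f x‖ ^ 2) ^ ((1:ℝ)/2) := by
    intro f hf
    have h := cs_aux (f := fun x => ‖f x‖) (g := fun _ => 1) hf.norm continuousOn_const
      (fun x => norm_nonneg _) (fun _ => zero_le_one)
    simpa using h
  -- Cauchy-Schwarz bound on ∫ Pu φ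
  have hCS : ‖∫ y in (0:ℝ)..1, Pfun u y * φ y‖ ≤
      (∫ x in (0:ℝ)..1, ‖Pfun u x‖ ^ 2) ^ ((1:ℝ)/2) *
        (∫ x in (0:ℝ)..1, ‖ψ' x‖ ^ 2) ^ ((1:ℝ)/2) := by
    have h1 : ‖∫ y in (0:ℝ)..1, Pfun u y * φ y‖ ≤ ∫ y in (0:ℝ)..1, ‖Pfun u y * φ y‖ :=
      intervalIntegral.norm_integral_le_integral_norm zero_le_one
    have h2 : (∫ y in (0:ℝ)..1, ‖Pfun u y * φ y‖) = ∫ y in (0:ℝ)..1, ‖Pfun u y‖ * ‖ψ' y‖ := by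
      congr 1
      funext y
      rw [norm_mul, hφdef, RCLike.norm_conj]
    have h3 := cs_aux (f := fun x => ‖Pfun u x‖) (g := fun x => ‖ψ' x‖) hPc.norm hψ'c.norm
      (fun x => norm_nonneg _) (fun x => norm_nonneg _)
    calc ‖∫ y in (0:ℝ)..1, Pfun u y * φ y‖ ≤ ∫ y in (0:ℝ)..1, ‖Pfun u y‖ * ‖ψ' y‖ := h2 ▸ h1
      _ ≤ _ := h3
  -- bound on ‖ψ 1‖
  have hgc : ContinuousOn (fun x => ∫ y in x..1, ψ' y) (Icc 0 1) := by
    have h := intervalIntegral.continuousOn_primitive_interval_left (a := 0) (b := 1)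
      (μ := volume) (f := ψ')
      (by rw [uIcc_of_le zero_le_one]; exact ContinuousOn.integrableOn_compact isCompact_Icc hψ'c)
    rwa [uIcc_of_le zero_le_one] at h
  have hgK : ∀ x ∈ Icc (0:ℝ) 1, ‖∫ y in x..1, ψ' y‖ ≤ ∫ y in (0:ℝ)..1, ‖ψ' y‖ := by
    intro x hx
    refine (intervalIntegral.norm_integral_le_integral_norm hx.2).trans ?_
    exact intervalIntegral.integral_mono_interval hx.1 hx.2 le_rfl
      (Filter.Eventually.of_forall fun y => norm_nonneg _) (contIcc_ii hψ'c.norm)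
  have hψ1 : ‖ψ 1‖ ≤ (∫ x in (0:ℝ)..1, ‖ψ x‖ ^ 2) ^ ((1:ℝ)/2) +
      (∫ x in (0:ℝ)..1, ‖ψ' x‖ ^ 2) ^ ((1:ℝ)/2) := by
    have e : EqOn (fun _ : ℝ => ψ 1) (fun x => ψ x + ∫ y in x..1, ψ' y) (uIcc 0 1) := by
      intro x hx
      rw [uIcc_of_le zero_le_one] at hx
      show ψ 1 = ψ x + ∫ y in x..1, ψ' y
      rw [hFTC x hx]
      ring
    have h0 : ψ 1 = ∫ x in (0:ℝ)..1, (ψ x + ∫ y in x..1, ψ' y) := by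
      rw [← intervalIntegral.integral_congr e]
      simp
    have h1 : ‖ψ 1‖ ≤ ∫ x in (0:ℝ)..1, ‖ψ x + ∫ y in x..1, ψ' y‖ := by
      rw [h0]
      exact intervalIntegral.norm_integral_le_integral_norm zero_le_one
    have h2 : (∫ x in (0:ℝ)..1, ‖ψ x + ∫ y in x..1, ψ' y‖) ≤
        ∫ x in (0:ℝ)..1, (‖ψ x‖ + ∫ y in (0:ℝ)..1, ‖ψ' y‖) := by
      refine intervalIntegral.integral_mono_on zero_le_one (contIcc_ii (hcψ.add hgc).norm)
        ((contIcc_ii hcψ.norm).add intervalIntegrable_const) ?_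
      intro x hx
      exact (norm_add_le _ _).trans (add_le_add le_rfl (hgK x hx))
    have h3 : (∫ x in (0:ℝ)..1, (‖ψ x‖ + ∫ y in (0:ℝ)..1, ‖ψ' y‖)) =
        (∫ x in (0:ℝ)..1, ‖ψ x‖) + ∫ y in (0:ℝ)..1, ‖ψ' y‖ := by
      rw [intervalIntegral.integral_add (contIcc_ii hcψ.norm) intervalIntegrable_const]
      simp
    have h4 := hL1L2 ψ hcψ
    have h5 := hL1L2 ψ' hψ'c
    linarith
  -- put everything together
  rw [hsplit, hfub, hPφ]
  have hnorm : ‖mu0 u * (starRingEnd ℂ) (ψ 1) - ∫ y in (0:ℝ)..1, Pfun u y * φ y‖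
      ≤ ‖mu0 u‖ * ‖ψ 1‖ + ‖∫ y in (0:ℝ)..1, Pfun u y * φ y‖ := by
    refine (norm_sub_le _ _).trans ?_
    rw [norm_mul, RCLike.norm_conj]
  nlinarith [hnorm, hCS, hψ1, hSψS, hSψ'S, hAnn, hBnn, hSnn,
    mul_le_mul_of_nonneg_left hψ1 hBnn, mul_le_mul_of_nonneg_left hSψS hBnn,
    mul_le_mul_of_nonneg_left hSψ'S hBnn, mul_le_mul_of_nonneg_left hSψ'S hAnn,
    mul_nonneg hAnn hSnn, mul_nonneg hBnn hSnn]
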